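/- Let A be a commutative ring, M an A-module, and W the free monoid on m letters (words in letters A_1, …, A_m, with identity the empty word e). Let (u_w)_{w ∈ W} be a family of elements of M that is linearly independent over A (every finitely supported A-linear relation Σ_w a_w u_w = 0 forces all a_w = 0). Let (γ_w)_{w ∈ W} be a family of elements of A with γ_e = 1. Define j_w = Σ_{(w′, w″) : w′w″ = w} γ_{w″}·u_{w′}, the sum over all factorizations of w as a concatenation w = w′w″. Then the family (j_w)_{w ∈ W} is linearly independent over A. -/
import Mathlib


/-- Convolution with a family `γ` of scalars with `γ_e = 1` preserves linear
independence of a family indexed by the free monoid on `m` letters: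
if `(u_w)` is `A`-linearly independent and `j_w = Σ_{w′w″ = w} γ_{w″}·u_{w′}` (the sum
over all factorizations of the word `w`, i.e. over all split points of the word),
then `(j_w)` is `A`-linearly independent. -/
theorem stmt11 (A : Type*) [CommRing A] (M : Type*) [AddCommGroup M] [Module A M]
    (m : ℕ) (u : FreeMonoid (Fin m) → M) (hu : LinearIndependent A u)
    (γ : FreeMonoid (Fin m) → A) (hγ : γ 1 = 1) :
    LinearIndependent A (fun w : FreeMonoid (Fin m) =>
      ∑ i ∈ Finset.range ((FreeMonoid.toList w).length + 1),
        γ (FreeMonoid.ofList ((FreeMonoid.toList w).drop i)) •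
          u (FreeMonoid.ofList ((FreeMonoid.toList w).take i))) := by
  classical
  rw [linearIndependent_iff']
  intro s g hsum w₀ hw₀
  set s' : Finset (FreeMonoid (Fin m)) :=
    s.biUnion (fun v => (Finset.range ((FreeMonoid.toList v).length + 1)).image
      (fun i => FreeMonoid.ofList ((FreeMonoid.toList v).take i))) with hs'def
  have hmem : ∀ v ∈ s, ∀ i ≤ (FreeMonoid.toList v).length,
      FreeMonoid.ofList ((FreeMonoid.toList v).take i) ∈ s' := by
    intro v hv i hi
    rw [hs'def]
    exact Finset.mem_biUnion.mpr ⟨v, hv,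
      Finset.mem_image.mpr ⟨i, Finset.mem_range.mpr (by omega), rfl⟩⟩
  have hss : ∀ v ∈ s, v ∈ s' := by
    intro v hv
    have := hmem v hv (FreeMonoid.toList v).length le_rfl
    simpa using this
  set c : FreeMonoid (Fin m) → A := fun w' =>
    ∑ v ∈ s, (if (FreeMonoid.toList w') <+: (FreeMonoid.toList v)
      then g v * γ (FreeMonoid.ofList
        ((FreeMonoid.toList v).drop (FreeMonoid.toList w').length)) else 0) with hcdef
  have hfilter : ∀ v ∈ s,
      s'.filter (fun w' => (FreeMonoid.toList w') <+: (FreeMonoid.toList v))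
        = (Finset.range ((FreeMonoid.toList v).length + 1)).image
            (fun i => FreeMonoid.ofList ((FreeMonoid.toList v).take i)) := by
    intro v hv
    ext w'
    simp only [Finset.mem_filter, Finset.mem_image, Finset.mem_range]
    constructor
    · rintro ⟨-, hpfx⟩
      refine ⟨(FreeMonoid.toList w').length, by have := hpfx.length_le; omega, ?_⟩
      have h := List.prefix_iff_eq_take.mp hpfx
      rw [← h]; simp
    · rintro ⟨i, hi, rfl⟩
      refine ⟨hmem v hv i (by omega), ?_⟩
      simpa using List.take_prefix i (FreeMonoid.toList v)
  have hinj : ∀ v : FreeMonoid (Fin m),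
      ∀ i ∈ Finset.range ((FreeMonoid.toList v).length + 1),
      ∀ j ∈ Finset.range ((FreeMonoid.toList v).length + 1),
      FreeMonoid.ofList ((FreeMonoid.toList v).take i)
        = FreeMonoid.ofList ((FreeMonoid.toList v).take j) → i = j := by
    intro v i hi j hj hij
    have : ((FreeMonoid.toList v).take i).length = ((FreeMonoid.toList v).take j).length := by
      have := congrArg FreeMonoid.toList hij
      simpa using this
    simp only [List.length_take] at this
    simp only [Finset.mem_range] at hi hj
    omega
  have hmain : ∑ w' ∈ s', c w' • u w' = 0 := by
    rw [← hsum, hcdef]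
    simp only [Finset.sum_smul, ite_smul, zero_smul]
    rw [Finset.sum_comm]
    refine Finset.sum_congr rfl (fun v hv => ?_)
    rw [← Finset.sum_filter, hfilter v hv, Finset.sum_image (hinj v)]
    rw [Finset.smul_sum]
    refine Finset.sum_congr rfl (fun i hi => ?_)
    simp only [Finset.mem_range] at hi
    rw [FreeMonoid.toList_ofList, List.length_take, min_eq_left (by omega), smul_smul]
  have hc0 : ∀ w' ∈ s', c w' = 0 := linearIndependent_iff'.mp hu s' c hmain
  have step : ∀ v ∈ s,
      (∀ v' ∈ s, (FreeMonoid.toList v).length < (FreeMonoid.toList v').length → g v' = 0) →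
      g v = 0 := by
    intro v hv hlong
    have h0 := hc0 v (hss v hv)
    rw [hcdef] at h0
    beta_reduce at h0
    rw [Finset.sum_eq_single v] at h0
    · simpa [hγ] using h0
    · intro b hb hne
      by_cases hp : (FreeMonoid.toList v) <+: (FreeMonoid.toList b)
      · have hlt : (FreeMonoid.toList v).length < (FreeMonoid.toList b).length := by
          rcases lt_or_eq_of_le hp.length_le with h | h
          · exact h
          · exfalso; exact hne (by
              have := List.IsPrefix.eq_of_length hp h
              have := congrArg FreeMonoid.ofList this
              simpa using this.symm)
        simp [hp, hlong b hb hlt]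
      · simp [hp]
    · intro h; exact absurd hv h
  set N := s.sup (fun v => (FreeMonoid.toList v).length) with hN
  have H : ∀ k, ∀ v ∈ s, N ≤ (FreeMonoid.toList v).length + k → g v = 0 := by
    intro k
    induction k with
    | zero =>
      intro v hv hlen
      refine step v hv (fun v' hv' hlt => absurd ?_ (by omega : ¬ N < N))
      calc N ≤ (FreeMonoid.toList v).length + 0 := hlen
        _ < (FreeMonoid.toList v').length := by omega
        _ ≤ N := Finset.le_sup hv'
    | succ k ih =>
      intro v hv hlen
      exact step v hv (fun v' hv' hlt => ih v' hv' (by omega))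
  exact H N w₀ hw₀ (by omega)
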